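/- Let G be a finite abelian group of order N with #{x ∈ G : 2x = 0} = 2^e. Then #{(i,j,k,l) ∈ G⁴ : i,j,k,l pairwise distinct and i + j = k + l} = N(N² − 4N + 2^e + 2). -/

import Mathlib

open Finset

private lemma tc_shift {G : Type*} [AddCommGroup G] [Fintype G] [DecidableEq G]
    (i : G) : (univ.filter (fun k : G => k + k = i + i)).card
      = (univ.filter (fun x : G => x + x = 0)).card := by
  apply Finset.card_nbij' (fun k => k - i) (fun x => x + i)
  · intro k hk
    simp only [mem_coe, mem_filter, mem_univ, true_and] at hk ⊢
    have : k - i + (k - i) = (k + k) - (i + i) := by abel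
    rw [this, hk, sub_self]
  · intro x hx
    simp only [mem_coe, mem_filter, mem_univ, true_and] at hx ⊢
    have : x + i + (x + i) = (x + x) + (i + i) := by abel
    rw [this, hx, zero_add]
  · intro k _; simp
  · intro x _; simp

/-- For a finite abelian group `G` of order `N` with `#{x ∈ G : 2x = 0} = 2^e`,
the number of quadruples `(i,j,k,l) ∈ G⁴` of pairwise distinct elements with
`i + j = k + l` equals `N(N² − 4N + 2^e + 2)`. -/
theorem count_quadruples_i_add_j_eq_k_add_l
    (G : Type*) [AddCommGroup G] [Fintype G] [DecidableEq G] (e : ℕ)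
    (he : (Finset.univ.filter (fun x : G => x + x = 0)).card = 2 ^ e) :
    ((Finset.univ.filter (fun t : G × G × G × G =>
        t.1 ≠ t.2.1 ∧ t.1 ≠ t.2.2.1 ∧ t.1 ≠ t.2.2.2 ∧
        t.2.1 ≠ t.2.2.1 ∧ t.2.1 ≠ t.2.2.2 ∧ t.2.2.1 ≠ t.2.2.2 ∧
        t.1 + t.2.1 = t.2.2.1 + t.2.2.2)).card : ℤ) =
      (Fintype.card G) *
        ((Fintype.card G : ℤ) ^ 2 - 4 * (Fintype.card G) + 2 ^ e + 2) := by
  classical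
  set N := Fintype.card G with hN
  set t : G → ℕ := fun c => (univ.filter (fun k : G => k + k = c)).card with ht
  have htwo : ∀ i : G, t (i + i) = 2 ^ e := fun i => by rw [ht]; exact (tc_shift i).trans he
  have hsumt : ∑ c : G, t c = N := by
    rw [hN, ← Finset.card_univ]
    exact (Finset.card_eq_sum_card_fiberwise (f := fun k : G => k + k)
      (fun k _ => mem_univ _)).symm
  have hrow : ∀ i : G, ∑ j : G, t (i + j) = N := by
    intro i
    rw [← hsumt]
    exact Fintype.sum_equiv (Equiv.addLeft i) _ _ (fun j => rfl)
  -- the set of triples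
  set B := univ.filter (fun s : G × G × G =>
      s.1 ≠ s.2.1 ∧ s.1 ≠ s.2.2 ∧ s.2.1 ≠ s.2.2 ∧ s.2.2 + s.2.2 ≠ s.1 + s.2.1) with hB
  -- bijection quadruples ↔ triples
  have hquad : (univ.filter (fun t : G × G × G × G =>
        t.1 ≠ t.2.1 ∧ t.1 ≠ t.2.2.1 ∧ t.1 ≠ t.2.2.2 ∧
        t.2.1 ≠ t.2.2.1 ∧ t.2.1 ≠ t.2.2.2 ∧ t.2.2.1 ≠ t.2.2.2 ∧
        t.1 + t.2.1 = t.2.2.1 + t.2.2.2)).card = B.card := by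
    apply Finset.card_nbij' (fun q => (q.1, q.2.1, q.2.2.1))
      (fun s => (s.1, s.2.1, s.2.2, s.1 + s.2.1 - s.2.2))
    · rintro ⟨i, j, k, l⟩ hq
      simp only [mem_coe, hB, mem_filter, mem_univ, true_and] at hq ⊢
      obtain ⟨h1, h2, h3, h4, h5, h6, h7⟩ := hq
      refine ⟨h1, h2, ?_, ?_⟩
      · rintro rfl
        rw [add_comm j l] at h7
        exact h3 (add_right_cancel h7)
      · intro hk
        exact h6 (add_left_cancel (hk.trans h7))
    · rintro ⟨i, j, k⟩ hs
      simp only [mem_coe, hB, mem_filter, mem_univ, true_and] at hs ⊢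
      obtain ⟨h1, h2, h3, h4⟩ := hs
      refine ⟨h1, h2, ?_, h3, ?_, ?_, by abel⟩
      · intro hi
        exact h3 (add_left_cancel (eq_sub_iff_add_eq.mp hi)).symm
      · intro hj
        have h := eq_sub_iff_add_eq.mp hj
        rw [add_comm i j] at h
        exact h2 (add_left_cancel h).symm
      · intro hk
        exact h4 (eq_sub_iff_add_eq.mp hk)
    · rintro ⟨i, j, k, l⟩ hq
      simp only [mem_coe, hB, mem_filter, mem_univ, true_and] at hq
      obtain ⟨h1, h2, h3, h4, h5, h6, h7⟩ := hq
      have hl : i + j - k = l := sub_eq_iff_eq_add.mpr (h7.trans (add_comm k l))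
      show (i, j, k, i + j - k) = (i, j, k, l)
      rw [hl]
    · rintro ⟨i, j, k⟩ _; rfl
  -- fiberwise count of B over pairs (i,j)
  have hfiber : B.card = ∑ p ∈ (univ : Finset G).offDiag,
      (univ.filter (fun k : G => p.1 ≠ k ∧ p.2 ≠ k ∧ k + k ≠ p.1 + p.2)).card := by
    rw [Finset.card_eq_sum_card_fiberwise (f := fun s : G × G × G => (s.1, s.2.1))
      (t := (univ : Finset G).offDiag) ?_]
    · apply Finset.sum_congr rfl
      rintro ⟨i, j⟩ hp
      simp only [mem_offDiag, mem_univ, true_and] at hp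
      apply Finset.card_nbij' (fun s => s.2.2) (fun k => (i, j, k))
      · rintro ⟨a, b, k⟩ hs
        simp only [mem_coe, hB, mem_filter, mem_univ, true_and, Prod.mk.injEq] at hs ⊢
        obtain ⟨⟨h1, h2, h3, h4⟩, rfl, rfl⟩ := hs
        exact ⟨h2, h3, h4⟩
      · intro k hk
        simp only [mem_coe, hB, mem_filter, mem_univ, true_and, Prod.mk.injEq,
          and_true] at hk ⊢
        exact ⟨hp, hk.1, hk.2.1, hk.2.2⟩
      · rintro ⟨a, b, k⟩ hs
        simp only [mem_coe, hB, mem_filter, mem_univ, true_and, Prod.mk.injEq] at hs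
        obtain ⟨-, rfl, rfl⟩ := hs
        rfl
      · intro k _; rfl
    · rintro ⟨i, j, k⟩ hs
      simp only [mem_coe, hB, mem_filter, mem_univ, true_and] at hs
      exact Finset.mem_offDiag.mpr ⟨mem_univ _, mem_univ _, hs.1⟩
  -- value of each fiber
  have hinner : ∀ p : G × G, p ∈ (univ : Finset G).offDiag →
      ((univ.filter (fun k : G => p.1 ≠ k ∧ p.2 ≠ k ∧ k + k ≠ p.1 + p.2)).card : ℤ)
        = (N : ℤ) - 2 - t (p.1 + p.2) := by
    rintro ⟨i, j⟩ hp
    simp only [mem_offDiag, mem_univ, true_and] at hp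
    have hcompl : (univ.filter (fun k : G => ¬(i ≠ k ∧ j ≠ k ∧ k + k ≠ i + j))).card
        = 2 + t (i + j) := by
      have hset : univ.filter (fun k : G => ¬(i ≠ k ∧ j ≠ k ∧ k + k ≠ i + j))
          = {i, j} ∪ univ.filter (fun k : G => k + k = i + j) := by
        ext k
        simp only [mem_filter, mem_univ, true_and, mem_union, mem_insert, mem_singleton]
        constructor
        · intro h
          rcases not_and_or.mp h with h | h
          · exact Or.inl (Or.inl (not_ne_iff.mp h).symm)
          rcases not_and_or.mp h with h | h
          · exact Or.inl (Or.inr (not_ne_iff.mp h).symm)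
          · exact Or.inr (not_ne_iff.mp h)
        · rintro ((rfl | rfl) | h)
          · simp
          · simp
          · simp [h]
      have hdisj : Disjoint ({i, j} : Finset G)
          (univ.filter (fun k : G => k + k = i + j)) := by
        simp only [Finset.disjoint_left, mem_insert, mem_singleton]
        rintro a (rfl | rfl) ha
        · simp only [mem_filter, mem_univ, true_and] at ha
          exact hp (add_left_cancel ha)
        · simp only [mem_filter, mem_univ, true_and] at ha
          exact hp (add_right_cancel ha).symm
      rw [hset, Finset.card_union_of_disjoint hdisj, Finset.card_pair hp, ht]
    have htotal := Finset.card_filter_add_card_filter_not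
      (s := (univ : Finset G)) (p := fun k : G => i ≠ k ∧ j ≠ k ∧ k + k ≠ i + j)
    rw [Finset.card_univ, ← hN, hcompl] at htotal
    have : ((univ.filter (fun k : G => i ≠ k ∧ j ≠ k ∧ k + k ≠ i + j)).card : ℤ)
        + (2 + t (i + j)) = N := by exact_mod_cast congrArg (Nat.cast : ℕ → ℤ) htotal
    linarith
  -- sum of t over offDiag
  have hsquare : ∑ p ∈ (univ : Finset G) ×ˢ (univ : Finset G), t (p.1 + p.2) = N * N := by
    rw [Finset.sum_product]
    simp only [hrow]
    simp [mul_comm]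
    exact Or.inl hN.symm
  have hdiag : ∑ p ∈ (univ : Finset G).diag, t (p.1 + p.2) = N * 2 ^ e := by
    rw [Finset.sum_diag]
    simp [htwo, mul_comm]
    exact hN.symm
  have hoff : (∑ p ∈ (univ : Finset G).offDiag, (t (p.1 + p.2) : ℤ))
      = (N : ℤ) * N - N * 2 ^ e := by
    have := Finset.sum_union (f := fun p : G × G => (t (p.1 + p.2) : ℤ))
      (Finset.disjoint_diag_offDiag (univ : Finset G))
    rw [Finset.diag_union_offDiag] at this
    have h1 : (∑ p ∈ (univ : Finset G) ×ˢ univ, (t (p.1 + p.2) : ℤ)) = (N : ℤ) * N := by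
      exact_mod_cast congrArg (Nat.cast : ℕ → ℤ) hsquare
    have h2 : (∑ p ∈ (univ : Finset G).diag, (t (p.1 + p.2) : ℤ)) = (N : ℤ) * 2 ^ e := by
      exact_mod_cast congrArg (Nat.cast : ℕ → ℤ) hdiag
    rw [h1, h2] at this
    linarith
  have hcardOff : ((univ : Finset G).offDiag.card : ℤ) = (N : ℤ) * N - N := by
    rw [Finset.offDiag_card, Finset.card_univ, ← hN]
    have : N ≤ N * N := Nat.le_mul_of_pos_left N (Nat.pos_of_ne_zero (by
      intro h
      exact (Fintype.card_ne_zero (α := G)) (hN ▸ h)))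
    push_cast [Nat.cast_sub this]
    ring
  -- put it together
  rw [hquad, hfiber]
  push_cast
  rw [Finset.sum_congr rfl hinner]
  rw [Finset.sum_sub_distrib, Finset.sum_const, hoff]
  rw [nsmul_eq_mul, hcardOff]
  ring
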